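/- Let K ⊆ L be fields (K ≠ L). The composite ring R = K + XL[X] is Noetherian if and only if [L:K] < ∞. -/

import Mathlib

section CompositeSetup

variable {L : Type*} [Field L]

/-- The polynomial composite `K + X L[X]` as a subring of `L[X]`. -/
def composite (K : Subring L) : Subring (Polynomial L) where
  carrier := {p | p.coeff 0 ∈ K}
  one_mem' := by simpa using K.one_mem
  zero_mem' := by simpa using K.zero_mem
  add_mem' := by
    intro a b ha hb
    simpa [Polynomial.coeff_add] using K.add_mem ha hb
  neg_mem' := by
    intro a ha
    simpa [Polynomial.coeff_neg] using K.neg_mem ha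
  mul_mem' := by
    intro a b ha hb
    simpa [Polynomial.mul_coeff_zero] using K.mul_mem ha hb

/-- `L` is the fraction field of the subring `K`. -/
def FracOfField (K : Subring L) : Prop :=
  ∀ l : L, ∃ a ∈ K, ∃ b ∈ K, b ≠ 0 ∧ l * b = a

/-- A Prüfer domain: every nonzero finitely generated ideal is invertible. -/
def IsPruferDomain (A : Type*) [CommRing A] [IsDomain A] : Prop :=
  ∀ I : Ideal A, I ≠ ⊥ → I.FG →
    IsUnit (I : FractionalIdeal (nonZeroDivisors A) (FractionRing A))

/-- A GCD domain: any two nonzero elements admit a greatest common divisor. -/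
def IsGCDDomain (A : Type*) [CommRing A] [IsDomain A] : Prop :=
  ∀ a b : A, a ≠ 0 → b ≠ 0 →
    ∃ g : A, g ∣ a ∧ g ∣ b ∧ ∀ c : A, c ∣ a → c ∣ b → c ∣ g

end CompositeSetup

namespace Stmt10Aux

open Polynomial

variable {L : Type*} [Field L] (K : Subring L)

lemma mem_composite {p : Polynomial L} : p ∈ composite K ↔ p.coeff 0 ∈ K := Iff.rfl

/-- The natural map `K[X] → K + XL[X]`. -/
noncomputable def psi : Polynomial ↥K →+* ↥(composite K) :=
  (Polynomial.mapRingHom K.subtype).codRestrict (composite K) fun p => by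
    simp only [mem_composite, coe_mapRingHom, Polynomial.coeff_map]
    exact (p.coeff 0).2

@[simp] lemma coe_psi (p : Polynomial ↥K) :
    ((psi K p : ↥(composite K)) : Polynomial L) = p.map K.subtype := rfl

noncomputable instance compositeAlgebra : Algebra (Polynomial ↥K) ↥(composite K) :=
  (psi K).toAlgebra

lemma coe_smul (r : Polynomial ↥K) (z : ↥(composite K)) :
    ((r • z : ↥(composite K)) : Polynomial L) = r.map K.subtype * (z : Polynomial L) := by
  rw [Algebra.smul_def, RingHom.algebraMap_toAlgebra]
  rfl

/-- The element `X * C l` of the composite. -/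
noncomputable def XC (l : L) : ↥(composite K) :=
  ⟨Polynomial.X * Polynomial.C l, by simp [mem_composite, Polynomial.mul_coeff_zero, K.zero_mem]⟩

@[simp] lemma coe_XC (l : L) : ((XC K l : ↥(composite K)) : Polynomial L) =
    Polynomial.X * Polynomial.C l := rfl

lemma isNoetherianRing_subring (hK : ∀ x ∈ K, x ≠ 0 → x⁻¹ ∈ K) : IsNoetherianRing ↥K := by
  rw [isNoetherianRing_iff_ideal_fg]
  intro J
  by_cases hJ : J = ⊥
  · exact hJ ▸ ⟨∅, by simp⟩
  · have : J = ⊤ := by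
      obtain ⟨x, hxJ, hx0⟩ := Submodule.exists_mem_ne_zero_of_ne_bot hJ
      have hx0' : (x : L) ≠ 0 := fun h => hx0 (Subtype.ext h)
      rw [Ideal.eq_top_iff_one]
      have : (⟨(x : L)⁻¹, hK _ x.2 hx0'⟩ : ↥K) * x = 1 := by
        ext; exact inv_mul_cancel₀ hx0'
      exact this ▸ Ideal.mul_mem_left _ _ hxJ
    exact this ▸ ⟨{1}, by simp [Ideal.span_singleton_one]⟩

lemma moduleFinite (hK : ∀ x ∈ K, x ≠ 0 → x⁻¹ ∈ K) (h : Module.Finite ↥K L) :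
    Module.Finite (Polynomial ↥K) ↥(composite K) := by
  obtain ⟨s, hs⟩ := Module.finite_def.mp h
  classical
  refine Module.finite_def.mpr ⟨insert 1 (s.image fun l => XC K l), eq_top_iff.mpr ?_⟩
  set M : Submodule (Polynomial ↥K) ↥(composite K) :=
    Submodule.span (Polynomial ↥K) ↑(insert 1 (s.image fun l => XC K l)) with hM
  -- XC a ∈ M for all a : L
  have hXC : ∀ a : L, XC K a ∈ M := by
    intro a
    have ha : a ∈ Submodule.span ↥K (↑s : Set L) := by rw [hs]; trivial
    refine Submodule.span_induction (p := fun x _ => XC K x ∈ M) ?_ ?_ ?_ ?_ ha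
    · intro x hx
      exact Submodule.subset_span (by simp [Finset.mem_insert, Finset.mem_image]; right; exact ⟨x, hx, rfl⟩)
    · show XC K (0 : L) ∈ M
      have : XC K (0 : L) = 0 := Subtype.ext (by simp [coe_XC])
      rw [this]; exact M.zero_mem
    · intro x y _ _ hx hy
      show XC K (x + y) ∈ M
      have : XC K (x + y) = XC K x + XC K y := Subtype.ext (by
        push_cast [coe_XC]
        rw [Polynomial.C_add]; ring)
      rw [this]; exact M.add_mem hx hy
    · intro k x _ hx
      show XC K (k • x) ∈ M
      have : XC K (k • x) = (Polynomial.C k : Polynomial ↥K) • XC K x := Subtype.ext (by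
        rw [coe_smul]
        push_cast [coe_XC, Polynomial.map_C]
        have hsm : (k • x : L) = (k : L) * x := rfl
        rw [hsm, Polynomial.C_mul]
        show Polynomial.X * (Polynomial.C ((k : L)) * Polynomial.C x) =
          Polynomial.C ((k : L)) * (Polynomial.X * Polynomial.C x)
        ring)
      rw [this]; exact M.smul_mem _ hx
  -- X * q ∈ M for all q : L[X]
  have hXq : ∀ q : Polynomial L,
      (⟨Polynomial.X * q, by simp [mem_composite, Polynomial.mul_coeff_zero, K.zero_mem]⟩ :
        ↥(composite K)) ∈ M := by
    intro q
    induction q using Polynomial.induction_on' with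
    | add p r hp hr =>
      have : (⟨Polynomial.X * (p + r), by
            simp [mem_composite, Polynomial.mul_coeff_zero, K.zero_mem]⟩ : ↥(composite K)) =
          ⟨Polynomial.X * p, by simp [mem_composite, Polynomial.mul_coeff_zero, K.zero_mem]⟩ +
          ⟨Polynomial.X * r, by simp [mem_composite, Polynomial.mul_coeff_zero, K.zero_mem]⟩ :=
        Subtype.ext (by push_cast; ring)
      rw [this]; exact M.add_mem hp hr
    | monomial n a =>
      have : (⟨Polynomial.X * Polynomial.monomial n a, by
            simp [mem_composite, Polynomial.mul_coeff_zero, K.zero_mem]⟩ : ↥(composite K)) =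
          ((Polynomial.X : Polynomial ↥K) ^ n) • XC K a := Subtype.ext (by
        rw [coe_smul]
        push_cast [Polynomial.map_pow, Polynomial.map_X, coe_XC]
        rw [← Polynomial.C_mul_X_pow_eq_monomial]
        ring)
      rw [this]; exact M.smul_mem _ (hXC a)
  -- conclude
  rintro ⟨p, hp⟩ -
  have hdecomp : (⟨p, hp⟩ : ↥(composite K)) =
      (Polynomial.C (⟨p.coeff 0, hp⟩ : ↥K) : Polynomial ↥K) • (1 : ↥(composite K)) +
      ⟨Polynomial.X * p.divX, by simp [mem_composite, Polynomial.mul_coeff_zero, K.zero_mem]⟩ :=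
      Subtype.ext (by
    rw [Subring.coe_add, coe_smul]
    push_cast [Polynomial.map_C]
    show (p : Polynomial L) = Polynomial.C ((⟨p.coeff 0, hp⟩ : ↥K) : L) * 1 +
      Polynomial.X * p.divX
    rw [mul_one]
    show (p : Polynomial L) = Polynomial.C (p.coeff 0) + Polynomial.X * p.divX
    rw [add_comm, Polynomial.X_mul_divX_add])
  rw [hdecomp]
  exact M.add_mem (M.smul_mem _ (Submodule.subset_span (by simp))) (hXq p.divX)

set_option maxHeartbeats 1000000 in
lemma backward {hK : ∀ x ∈ K, x ≠ 0 → x⁻¹ ∈ K} (h : Module.Finite ↥K L) :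
    IsNoetherianRing ↥(composite K) := by
  haveI : IsNoetherianRing ↥K := Stmt10Aux.isNoetherianRing_subring K hK
  haveI : IsNoetherianRing (Polynomial ↥K) := Polynomial.isNoetherianRing
  haveI : Module.Finite (Polynomial ↥K) ↥(composite K) := Stmt10Aux.moduleFinite K hK h
  have hN : IsNoetherian (Polynomial ↥K) ↥(composite K) :=
    isNoetherian_of_isNoetherianRing_of_finite _ _
  exact isNoetherianRing_iff.mpr (isNoetherian_of_tower (Polynomial ↥K) hN)

end Stmt10Aux

theorem stmt_10 {L : Type*} [Field L] (K : Subring L)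
    (hK : ∀ x ∈ K, x ≠ 0 → x⁻¹ ∈ K) (hKne : K ≠ ⊤) :
    IsNoetherianRing ↥(composite K) ↔ Module.Finite ↥K L := by
  classical
  constructor
  · -- Noetherian ⇒ finite
    intro h
    set A := ↥(composite K)
    let ev : A →+* L := (Polynomial.constantCoeff).comp (composite K).subtype
    have hI : (RingHom.ker ev).FG := by
      haveI : IsNoetherian A A := h
      exact IsNoetherian.noetherian _
    obtain ⟨G, hG⟩ := hI
    rw [Module.finite_def]
    refine ⟨G.image (fun z : A => (z : Polynomial L).coeff 1), eq_top_iff.mpr ?_⟩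
    intro l _
    -- X * C l lies in the kernel ideal
    have hzl : (⟨Polynomial.X * Polynomial.C l, by
        simp [Stmt10Aux.mem_composite, Polynomial.mul_coeff_zero, K.zero_mem]⟩ : A) ∈ RingHom.ker ev := by
      simp [ev, RingHom.mem_ker, RingHom.comp_apply, Polynomial.constantCoeff_apply,
        Polynomial.mul_coeff_zero]
    rw [← hG] at hzl
    rw [Ideal.span, Submodule.mem_span_finset] at hzl
    obtain ⟨f, -, hf⟩ := hzl
    have hcoe : ∀ g ∈ G, ((f g • g : A) : Polynomial L).coeff 1 =
        ((f g : Polynomial L).coeff 0) * ((g : Polynomial L).coeff 1) := by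
      intro g hg
      have hg0 : (g : Polynomial L).coeff 0 = 0 := by
        have : g ∈ RingHom.ker ev := hG ▸ Ideal.subset_span hg
        simp [ev, RingHom.mem_ker, Polynomial.constantCoeff_apply] at this
        exact this
      show ((f g : Polynomial L) * (g : Polynomial L)).coeff 1 = _
      rw [Polynomial.coeff_mul, Finset.Nat.sum_antidiagonal_succ]
      simp [hg0]
    have hl : l = ∑ g ∈ G, ((f g : Polynomial L).coeff 0) * ((g : Polynomial L).coeff 1) := by
      have := congrArg (fun z : A => (z : Polynomial L).coeff 1) hf
      simp only at this
      rw [← Finset.sum_congr rfl hcoe]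
      have hsum : ((∑ g ∈ G, f g • g : A) : Polynomial L) =
          ∑ g ∈ G, ((f g • g : A) : Polynomial L) :=
        map_sum ((composite K).subtype) _ _
      calc l = (Polynomial.X * Polynomial.C l).coeff 1 := by
              simp [Polynomial.coeff_X_mul]
        _ = ((∑ g ∈ G, f g • g : A) : Polynomial L).coeff 1 := by rw [hf]
        _ = ∑ g ∈ G, ((f g • g : A) : Polynomial L).coeff 1 := by
              rw [hsum, Polynomial.finset_sum_coeff]
    rw [hl]
    refine Submodule.sum_mem _ fun g hg => ?_
    have : ((f g : Polynomial L).coeff 0) * ((g : Polynomial L).coeff 1) =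
        (⟨(f g : Polynomial L).coeff 0, (f g).2⟩ : ↥K) • ((g : Polynomial L).coeff 1) := rfl
    rw [this]
    exact Submodule.smul_mem _ _ (Submodule.subset_span (by
      simp only [Finset.coe_image, Set.mem_image, Finset.mem_coe]
      exact ⟨g, hg, rfl⟩))
  · -- finite ⇒ Noetherian
    exact Stmt10Aux.backward K (hK := hK)
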